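/- There is no completely positive trace-preserving map Λ on 4×4 complex matrices that maps separable two-qubit states to separable two-qubit states and satisfies Λ(ρ_λ) = σ_λ for λ ∈ (2/3,1), where ρ_λ = λΦ₁ + (1−λ)|01⟩⟨01| and σ_λ = λΦ₁ + (1−λ)Φ₃. -/

import Mathlib

open Matrix Complex BigOperators
open scoped ComplexOrder

noncomputable section

/-- Standard basis ket of ℂ⁴ -/
def ket (k : Fin 4) : Fin 4 → ℂ := fun j => if j = k then 1 else 0

/-- Tensor product of two qubit vectors, with |ij⟩ ↦ index 2i+j -/
def tens (ψ χ : Fin 2 → ℂ) : Fin 4 → ℂ :=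
  ![ψ 0 * χ 0, ψ 0 * χ 1, ψ 1 * χ 0, ψ 1 * χ 1]

/-- Outer product |v⟩⟨v| -/
def proj (v : Fin 4 → ℂ) : Matrix (Fin 4) (Fin 4) ℂ :=
  Matrix.of fun i j => v i * star (v j)

/-- A qubit vector is a unit vector -/
def unit2 (ψ : Fin 2 → ℂ) : Prop := ∑ j, Complex.normSq (ψ j) = 1

/-- The four Bell vectors -/
def Bell : Fin 4 → (Fin 4 → ℂ) :=
  ![![1 / (Real.sqrt 2 : ℂ), 0, 0, 1 / (Real.sqrt 2 : ℂ)],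
    ![1 / (Real.sqrt 2 : ℂ), 0, 0, -(1 / (Real.sqrt 2 : ℂ))],
    ![0, 1 / (Real.sqrt 2 : ℂ), 1 / (Real.sqrt 2 : ℂ), 0],
    ![0, -(1 / (Real.sqrt 2 : ℂ)), 1 / (Real.sqrt 2 : ℂ), 0]]

/-- Bell projectors Φᵢ (indexed from 0: `Phi 0` is Φ₁, etc.) -/
def Phi (i : Fin 4) : Matrix (Fin 4) (Fin 4) ℂ := proj (Bell i)

/-- Separability of a two-qubit (4×4) matrix -/
def IsSepState (ρ : Matrix (Fin 4) (Fin 4) ℂ) : Prop :=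
  ∃ (n : ℕ) (p : Fin n → ℝ) (ψ χ : Fin n → Fin 2 → ℂ),
    (∀ i, 0 ≤ p i) ∧ (∑ i, p i = 1) ∧ (∀ i, unit2 (ψ i)) ∧ (∀ i, unit2 (χ i)) ∧
    ρ = ∑ i, (p i : ℂ) • proj (tens (ψ i) (χ i))

/-- Density matrix -/
def IsState (ρ : Matrix (Fin 4) (Fin 4) ℂ) : Prop := ρ.PosSemidef ∧ ρ.trace = 1

/-- Complete positivity of a linear map on 4×4 matrices. -/
def IsCompletelyPositive
    (Λ : Matrix (Fin 4) (Fin 4) ℂ →ₗ[ℂ] Matrix (Fin 4) (Fin 4) ℂ) : Prop :=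
  ∀ (n : ℕ) (M : Matrix (Fin n × Fin 4) (Fin n × Fin 4) ℂ), M.PosSemidef →
    (Matrix.of fun (p q : Fin n × Fin 4) =>
      Λ (Matrix.of fun a b => M (p.1, a) (q.1, b)) p.2 q.2).PosSemidef

/-! ### Auxiliary machinery -/

/-- quadratic form ⟨v, X v⟩ -/
def qf (v : Fin 4 → ℂ) (X : Matrix (Fin 4) (Fin 4) ℂ) : ℂ := star v ⬝ᵥ (X *ᵥ v)

lemma qf_add (v : Fin 4 → ℂ) (X Y : Matrix (Fin 4) (Fin 4) ℂ) :
    qf v (X + Y) = qf v X + qf v Y := by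
  simp [qf, Matrix.add_mulVec, dotProduct_add]

lemma qf_smul (v : Fin 4 → ℂ) (c : ℂ) (X : Matrix (Fin 4) (Fin 4) ℂ) :
    qf v (c • X) = c * qf v X := by
  simp [qf, Matrix.smul_mulVec, dotProduct_smul]

lemma qf_sum {n : ℕ} (v : Fin 4 → ℂ) (X : Fin n → Matrix (Fin 4) (Fin 4) ℂ) :
    qf v (∑ i, X i) = ∑ i, qf v (X i) := by
  unfold qf
  have h : (∑ i, X i) *ᵥ v = ∑ i, X i *ᵥ v :=
    map_sum (Matrix.mulVec.addMonoidHomLeft v) X Finset.univ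
  rw [h]
  simp [dotProduct, Finset.mul_sum]
  exact Finset.sum_comm

lemma qf_proj (v w : Fin 4 → ℂ) :
    qf v (proj w) = ((Complex.normSq (star v ⬝ᵥ w) : ℝ) : ℂ) := by
  have h : ∀ i, (proj w *ᵥ v) i = w i * (star w ⬝ᵥ v) := by
    intro i
    simp [proj, mulVec, dotProduct, Finset.mul_sum, mul_assoc]
  have h2 : qf v (proj w) = (star v ⬝ᵥ w) * (star w ⬝ᵥ v) := by
    simp only [qf, dotProduct]
    simp only [h]
    rw [Finset.sum_mul]
    congr 1; ext x
    simp [dotProduct, mul_comm, mul_assoc, mul_left_comm, Finset.mul_sum]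
  rw [h2]
  have hs : star w ⬝ᵥ v = star (star v ⬝ᵥ w) := by
    simp [dotProduct, Complex.star_def, map_sum, mul_comm]
  rw [hs, Complex.star_def, Complex.mul_conj]

lemma proj_psd (w : Fin 4 → ℂ) : (proj w).PosSemidef := by
  refine Matrix.PosSemidef.of_dotProduct_mulVec_nonneg ?_ ?_
  · ext i j
    simp [proj, Matrix.conjTranspose_apply, mul_comm]
  · intro x
    have := qf_proj x w
    rw [qf] at this
    rw [this]
    exact_mod_cast Complex.normSq_nonneg _

lemma qf_re_nonneg {X : Matrix (Fin 4) (Fin 4) ℂ} (hX : X.PosSemidef)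
    (v : Fin 4 → ℂ) : 0 ≤ (qf v X).re := by
  have := hX.dotProduct_mulVec_nonneg v
  rw [Complex.le_def] at this
  simpa [qf] using this.1

lemma cp_pos {Λ : Matrix (Fin 4) (Fin 4) ℂ →ₗ[ℂ] Matrix (Fin 4) (Fin 4) ℂ}
    (hΛ : IsCompletelyPositive Λ) {X : Matrix (Fin 4) (Fin 4) ℂ}
    (hX : X.PosSemidef) : (Λ X).PosSemidef := by
  set M : Matrix (Fin 1 × Fin 4) (Fin 1 × Fin 4) ℂ :=
    Matrix.of fun p q => X p.2 q.2 with hM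
  have hMpsd : M.PosSemidef := by
    refine Matrix.PosSemidef.of_dotProduct_mulVec_nonneg ?_ ?_
    · ext p q
      simp only [hM, Matrix.conjTranspose_apply, Matrix.of_apply]
      exact congrFun (congrFun hX.1 p.2) q.2
    · intro y
      have := hX.dotProduct_mulVec_nonneg (fun a => y (0, a))
      have he : star y ⬝ᵥ (M *ᵥ y) =
          star (fun a => y (0, a)) ⬝ᵥ (X *ᵥ fun a => y (0, a)) := by
        simp [hM, dotProduct, mulVec, Fintype.sum_prod_type, Fin.sum_univ_one]
      rw [he]; exact this
  have hN := hΛ 1 M hMpsd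
  set N : Matrix (Fin 1 × Fin 4) (Fin 1 × Fin 4) ℂ :=
    Matrix.of fun p q => (Λ X) p.2 q.2 with hNdef
  have hR : (Matrix.of fun (p q : Fin 1 × Fin 4) =>
      Λ (Matrix.of fun a b => M (p.1, a) (q.1, b)) p.2 q.2) = N := by
    ext p q
    simp only [Matrix.of_apply, hM, hNdef]
    congr 1
  rw [hR] at hN
  refine Matrix.PosSemidef.of_dotProduct_mulVec_nonneg ?_ ?_
  · ext i j
    have := congrFun (congrFun hN.1 ((0 : Fin 1), i)) ((0 : Fin 1), j)
    simpa [Matrix.conjTranspose_apply, hNdef] using this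
  · intro x
    have := hN.dotProduct_mulVec_nonneg (fun p => x p.2)
    have he : star (fun (p : Fin 1 × Fin 4) => x p.2) ⬝ᵥ
        (N *ᵥ fun p => x p.2)
        = star x ⬝ᵥ ((Λ X) *ᵥ x) := by
      simp [hNdef, dotProduct, mulVec, Fintype.sum_prod_type, Fin.sum_univ_one]
    rwa [he] at this

/-! ### Numeric facts about √2 -/

lemma sqrt2_sq : ((Real.sqrt 2 : ℝ) : ℂ) * ((Real.sqrt 2 : ℝ) : ℂ) = 2 := by
  norm_cast
  rw [Real.mul_self_sqrt]; norm_num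

lemma star_invsqrt2 : star (1 / (Real.sqrt 2 : ℂ)) = 1 / (Real.sqrt 2 : ℂ) := by
  simp [Complex.star_def, map_div₀, Complex.conj_ofReal]

lemma inv2_mul : (1 / (Real.sqrt 2 : ℂ)) * (1 / (Real.sqrt 2 : ℂ)) = 1 / 2 := by
  rw [div_mul_div_comm, sqrt2_sq]
  norm_num

lemma normSq_invsqrt2 : Complex.normSq (1 / (Real.sqrt 2 : ℂ)) = 1 / 2 := by
  rw [Complex.normSq_div]
  simp only [Complex.normSq_ofReal, Complex.normSq_one]
  rw [Real.mul_self_sqrt] <;> norm_num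

/-! ### Bell vector computations -/

lemma trace_eq_qf_sum (X : Matrix (Fin 4) (Fin 4) ℂ) :
    X.trace = qf (Bell 0) X + qf (Bell 1) X + qf (Bell 2) X + qf (Bell 3) X := by
  have hsq : ((Real.sqrt 2 : ℝ) : ℂ) ^ 2 = 2 := by rw [sq]; exact sqrt2_sq
  simp only [qf, Bell, dotProduct, mulVec, Matrix.trace, Matrix.diag,
    Fin.sum_univ_four, Pi.star_apply, Matrix.cons_val_zero, Matrix.cons_val_one,
    Matrix.head_cons, Matrix.cons_val_two, Matrix.tail_cons, Matrix.cons_val_three,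
    star_invsqrt2, star_zero, star_neg]
  field_simp
  ring_nf
  linear_combination (X 0 0 + X 1 1 + X 2 2 + X 3 3) * hsq

lemma bell_dot_00 : star (Bell 0) ⬝ᵥ Bell 0 = 1 := by
  simp [Bell, dotProduct, Fin.sum_univ_four, star_invsqrt2]
  rw [← mul_inv, sqrt2_sq]
  norm_num

lemma bell_dot_02 : star (Bell 0) ⬝ᵥ Bell 2 = 0 := by
  simp [Bell, dotProduct, Fin.sum_univ_four]

lemma bell_dot_20 : star (Bell 2) ⬝ᵥ Bell 0 = 0 := by
  simp [Bell, dotProduct, Fin.sum_univ_four]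

lemma bell_dot_22 : star (Bell 2) ⬝ᵥ Bell 2 = 1 := by
  simp [Bell, dotProduct, Fin.sum_univ_four, star_invsqrt2]
  rw [← mul_inv, sqrt2_sq]
  norm_num

lemma qf_bell0_Phi0 : qf (Bell 0) (Phi 0) = 1 := by
  rw [Phi, qf_proj, bell_dot_00]; norm_num

lemma qf_bell0_Phi2 : qf (Bell 0) (Phi 2) = 0 := by
  rw [Phi, qf_proj, bell_dot_02]; norm_num

lemma qf_bell2_Phi0 : qf (Bell 2) (Phi 0) = 0 := by
  rw [Phi, qf_proj, bell_dot_20]; norm_num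

lemma qf_bell2_Phi2 : qf (Bell 2) (Phi 2) = 1 := by
  rw [Phi, qf_proj, bell_dot_22]; norm_num

lemma trace_Phi0 : (Phi 0).trace = 1 := by
  simp [Phi, proj, Bell, Matrix.trace, Matrix.diag, Fin.sum_univ_four, star_invsqrt2]
  rw [← mul_inv, sqrt2_sq]
  norm_num

/-! ### Entanglement witness bounds -/

lemma cauchy2 (a b c d : ℂ) :
    Complex.normSq (a * c + b * d) ≤
      (Complex.normSq a + Complex.normSq b) * (Complex.normSq c + Complex.normSq d) := by
  have h1 : ‖a * c + b * d‖ ≤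
      ‖a‖ * ‖c‖ + ‖b‖ * ‖d‖ := by
    calc ‖a * c + b * d‖ ≤ ‖a*c‖ + ‖b*d‖ :=
          norm_add_le _ _
    _ = _ := by simp [norm_mul]
  have h0 : (0:ℝ) ≤ ‖a*c+b*d‖ := norm_nonneg _
  have e : ∀ z : ℂ, Complex.normSq z = ‖z‖ ^ 2 := fun z => (Complex.sq_norm z).symm
  rw [e, e, e, e, e]
  nlinarith [norm_nonneg a, norm_nonneg b, norm_nonneg c,
    norm_nonneg d, sq_nonneg (‖a‖ * ‖d‖ - ‖b‖ * ‖c‖)]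

lemma bell0_dot_tens {ψ χ : Fin 2 → ℂ} (hψ : unit2 ψ) (hχ : unit2 χ) :
    Complex.normSq (star (Bell 0) ⬝ᵥ tens ψ χ) ≤ 1 / 2 := by
  have he : star (Bell 0) ⬝ᵥ tens ψ χ
      = (1 / (Real.sqrt 2 : ℂ)) * (ψ 0 * χ 0 + ψ 1 * χ 1) := by
    simp [Bell, tens, dotProduct, Fin.sum_univ_four, star_invsqrt2, mul_add]
  rw [he, Complex.normSq_mul, normSq_invsqrt2]
  have := cauchy2 (ψ 0) (ψ 1) (χ 0) (χ 1)
  have hψ' : Complex.normSq (ψ 0) + Complex.normSq (ψ 1) = 1 := by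
    simpa [unit2, Fin.sum_univ_two] using hψ
  have hχ' : Complex.normSq (χ 0) + Complex.normSq (χ 1) = 1 := by
    simpa [unit2, Fin.sum_univ_two] using hχ
  rw [hψ', hχ'] at this
  nlinarith

lemma bell2_dot_tens {ψ χ : Fin 2 → ℂ} (hψ : unit2 ψ) (hχ : unit2 χ) :
    Complex.normSq (star (Bell 2) ⬝ᵥ tens ψ χ) ≤ 1 / 2 := by
  have he : star (Bell 2) ⬝ᵥ tens ψ χ
      = (1 / (Real.sqrt 2 : ℂ)) * (ψ 0 * χ 1 + ψ 1 * χ 0) := by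
    simp [Bell, tens, dotProduct, Fin.sum_univ_four, star_invsqrt2, mul_add]
  rw [he, Complex.normSq_mul, normSq_invsqrt2]
  have := cauchy2 (ψ 0) (ψ 1) (χ 1) (χ 0)
  have hψ' : Complex.normSq (ψ 0) + Complex.normSq (ψ 1) = 1 := by
    simpa [unit2, Fin.sum_univ_two] using hψ
  have hχ' : Complex.normSq (χ 1) + Complex.normSq (χ 0) = 1 := by
    rw [add_comm]; simpa [unit2, Fin.sum_univ_two] using hχ
  rw [hψ', hχ'] at this
  nlinarith

lemma sep_qf_le {S : Matrix (Fin 4) (Fin 4) ℂ} (hS : IsSepState S)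
    (v : Fin 4 → ℂ)
    (hv : ∀ ψ χ : Fin 2 → ℂ, unit2 ψ → unit2 χ →
      Complex.normSq (star v ⬝ᵥ tens ψ χ) ≤ 1 / 2) :
    (qf v S).re ≤ 1 / 2 := by
  obtain ⟨n, p, ψ, χ, hp, hp1, hψ, hχ, hSeq⟩ := hS
  rw [hSeq, qf_sum]
  have h : ∀ i, qf v ((p i : ℂ) • proj (tens (ψ i) (χ i)))
      = (((p i * Complex.normSq (star v ⬝ᵥ tens (ψ i) (χ i))) : ℝ) : ℂ) := by
    intro i
    rw [qf_smul, qf_proj]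
    push_cast
    ring
  rw [Finset.sum_congr rfl fun i _ => h i, ← Complex.ofReal_sum, Complex.ofReal_re]
  calc (∑ i, p i * Complex.normSq (star v ⬝ᵥ tens (ψ i) (χ i)))
      ≤ ∑ i, p i * (1/2) := by
        apply Finset.sum_le_sum
        intro i _
        exact mul_le_mul_of_nonneg_left (hv _ _ (hψ i) (hχ i)) (hp i)
    _ = 1/2 := by rw [← Finset.sum_mul, hp1, one_mul]

/-! ### Separable states -/

lemma sep_ket1 : IsSepState (proj (ket 1)) := by
  refine ⟨1, fun _ => 1, fun _ => ![1, 0], fun _ => ![0, 1], fun i => by norm_num,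
    by simp, fun i => by simp [unit2, Fin.sum_univ_two],
    fun i => by simp [unit2, Fin.sum_univ_two], ?_⟩
  have h : ket 1 = tens ![1, 0] ![0, 1] := by
    funext j; fin_cases j <;> simp [ket, tens]
  simp [h]

lemma sep_ket2 : IsSepState (proj (ket 2)) := by
  refine ⟨1, fun _ => 1, fun _ => ![0, 1], fun _ => ![1, 0], fun i => by norm_num,
    by simp, fun i => by simp [unit2, Fin.sum_univ_two],
    fun i => by simp [unit2, Fin.sum_univ_two], ?_⟩
  have h : ket 2 = tens ![0, 1] ![1, 0] := by
    funext j; fin_cases j <;> simp [ket, tens]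
  simp [h]

def ee : Fin 4 → ℂ := ![1, I, -1, -I]
def psis (i : Fin 4) : Fin 2 → ℂ := ![1 / (Real.sqrt 2 : ℂ), ee i / (Real.sqrt 2 : ℂ)]
def chis (i : Fin 4) : Fin 2 → ℂ := ![1 / (Real.sqrt 2 : ℂ), star (ee i) / (Real.sqrt 2 : ℂ)]
def w4 : Fin 4 → Fin 4 → ℂ := fun i => ![1, star (ee i), ee i, 1]

lemma proj_smul (a : ℂ) (w : Fin 4 → ℂ) :
    proj (a • w) = (a * star a) • proj w := by
  ext i j
  simp [proj, mul_comm, mul_assoc, mul_left_comm]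

lemma ee_normSq (i : Fin 4) : ee i * star (ee i) = 1 := by
  fin_cases i <;> simp [ee]

lemma unit2_psis (i : Fin 4) : unit2 (psis i) := by
  fin_cases i <;>
    simp [unit2, psis, Fin.sum_univ_two, Complex.normSq_div, ee, Complex.normSq_ofReal] <;>
    norm_num

lemma unit2_chis (i : Fin 4) : unit2 (chis i) := by
  fin_cases i <;>
    simp [unit2, chis, Fin.sum_univ_two, Complex.normSq_div, ee, Complex.normSq_ofReal] <;>
    norm_num

lemma tens_eq (i : Fin 4) :
    tens (psis i) (chis i) = ((1 / (Real.sqrt 2 : ℂ)) * (1 / (Real.sqrt 2 : ℂ))) • w4 i := by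
  funext j
  have h1 : (starRingEnd ℂ) (ee i) * ee i = 1 := by
    rw [mul_comm]; exact ee_normSq i
  fin_cases j <;>
    simp [tens, psis, chis, w4, div_eq_mul_inv] <;> ring_nf <;>
    linear_combination ((Real.sqrt 2 : ℂ))⁻¹ * ((Real.sqrt 2 : ℂ))⁻¹ * h1

lemma proj_tens_eq (i : Fin 4) :
    proj (tens (psis i) (chis i)) = (1/4 : ℂ) • proj (w4 i) := by
  rw [tens_eq i, proj_smul, inv2_mul]
  norm_num

lemma bell0_eq : Bell 0 = (1 / (Real.sqrt 2 : ℂ)) • ![1, 0, 0, 1] := by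
  funext j
  fin_cases j <;> simp [Bell]

lemma Phi0_eq : Phi 0 = (1/2 : ℂ) • proj ![1, 0, 0, 1] := by
  rw [Phi, bell0_eq, proj_smul, star_invsqrt2, inv2_mul]

lemma Sident :
    (1/2 : ℂ) • Phi 0 + (1/4 : ℂ) • proj (ket 1) + (1/4 : ℂ) • proj (ket 2)
      = ∑ i : Fin 4, (((1:ℝ)/4 : ℝ) : ℂ) • proj (tens (psis i) (chis i)) := by
  have h : ∀ i : Fin 4, (((1:ℝ)/4 : ℝ) : ℂ) • proj (tens (psis i) (chis i))
      = (1/4 : ℂ) • ((1/4 : ℂ) • proj (w4 i)) := by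
    intro i; rw [proj_tens_eq]; norm_num
  rw [Finset.sum_congr rfl fun i _ => h i, Phi0_eq]
  ext i j
  fin_cases i <;> fin_cases j <;>
    simp [proj, w4, ee, ket, Fin.sum_univ_four, Matrix.sum_apply] <;>
    ring_nf <;> norm_num [Complex.I_sq, Complex.ext_iff]

lemma sep_S : IsSepState
    ((1/2 : ℂ) • Phi 0 + (1/4 : ℂ) • proj (ket 1) + (1/4 : ℂ) • proj (ket 2)) := by
  refine ⟨4, fun _ => (1:ℝ)/4, psis, chis, fun i => by norm_num,
    by simp [Fin.sum_univ_four], unit2_psis, unit2_chis, ?_⟩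
  exact Sident

/-! ### Main theorem -/

/-- Theorem 1: no CPTP non-entangling map sends ρ_λ to σ_λ for λ ∈ (2/3,1). -/
theorem no_NE_map (l : ℝ) (hl : 2 / 3 < l) (hl1 : l < 1) :
    ¬ ∃ Λ : Matrix (Fin 4) (Fin 4) ℂ →ₗ[ℂ] Matrix (Fin 4) (Fin 4) ℂ,
      IsCompletelyPositive Λ ∧ (∀ ρ, (Λ ρ).trace = ρ.trace) ∧
      (∀ ρ, IsSepState ρ → IsSepState (Λ ρ)) ∧
      Λ ((l : ℂ) • Phi 0 + ((1 - l : ℝ) : ℂ) • proj (ket 1))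
        = (l : ℂ) • Phi 0 + ((1 - l : ℝ) : ℂ) • Phi 2 := by
  rintro ⟨Λ, hCP, hTP, hNE, hmap⟩
  have hl0 : (0:ℝ) < l := by linarith
  set D := Λ (Phi 0) with hD
  set A := Λ (proj (ket 1)) with hA
  set B := Λ (proj (ket 2)) with hB
  -- linearity of the image of ρ_l
  have hDA : (l : ℂ) • D + ((1 - l : ℝ) : ℂ) • A
      = (l : ℂ) • Phi 0 + ((1 - l : ℝ) : ℂ) • Phi 2 := by
    rw [hD, hA]
    simpa only [map_add, LinearMap.map_smul] using hmap
  set fD := (qf (Bell 0) D).re with hfD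
  set fA := (qf (Bell 0) A).re with hfA
  set fB := (qf (Bell 0) B).re with hfB
  set gD := (qf (Bell 2) D).re with hgD
  set gA := (qf (Bell 2) A).re with hgA
  -- equations from hDA
  have e1 : l * fD + (1 - l) * fA = l := by
    have := congrArg (fun X => (qf (Bell 0) X).re) hDA
    simp only [qf_add, qf_smul, qf_bell0_Phi0, qf_bell0_Phi2] at this
    simpa [Complex.add_re, Complex.mul_re, Complex.ofReal_re, Complex.ofReal_im,
      hfD, hfA] using this
  have e2 : l * gD + (1 - l) * gA = 1 - l := by
    have := congrArg (fun X => (qf (Bell 2) X).re) hDA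
    simp only [qf_add, qf_smul, qf_bell2_Phi0, qf_bell2_Phi2] at this
    simpa [Complex.add_re, Complex.mul_re, Complex.ofReal_re, Complex.ofReal_im,
      hgD, hgA] using this
  -- positivity
  have hApsd : A.PosSemidef := cp_pos hCP (proj_psd _)
  have hBpsd : B.PosSemidef := cp_pos hCP (proj_psd _)
  have hDpsd : D.PosSemidef := cp_pos hCP (proj_psd _)
  have i1 : 0 ≤ fA := qf_re_nonneg hApsd _
  have i2 : 0 ≤ fB := qf_re_nonneg hBpsd _
  have iD1 : 0 ≤ (qf (Bell 1) D).re := qf_re_nonneg hDpsd _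
  have iD3 : 0 ≤ (qf (Bell 3) D).re := qf_re_nonneg hDpsd _
  -- separability bounds
  have i3 : gA ≤ 1/2 := sep_qf_le (hNE _ sep_ket1) (Bell 2)
    (fun ψ χ hψ hχ => bell2_dot_tens hψ hχ)
  -- separable image of S
  have hLS : Λ ((1/2 : ℂ) • Phi 0 + (1/4 : ℂ) • proj (ket 1) + (1/4 : ℂ) • proj (ket 2))
      = (1/2 : ℂ) • D + (1/4 : ℂ) • A + (1/4 : ℂ) • B := by
    rw [hD, hA, hB]
    simp only [map_add, LinearMap.map_smul]
  have i4 : (1/2) * fD + (1/4) * fA + (1/4) * fB ≤ 1/2 := by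
    have hsep := hNE _ sep_S
    rw [hLS] at hsep
    have := sep_qf_le hsep (Bell 0) (fun ψ χ hψ hχ => bell0_dot_tens hψ hχ)
    simp only [qf_add, qf_smul] at this
    simpa [Complex.add_re, Complex.mul_re, hfD, hfA, hfB] using this
  -- trace constraint
  have i5 : fD + gD ≤ 1 := by
    have htr : D.trace = 1 := by rw [hD, hTP, trace_Phi0]
    have := congrArg Complex.re (trace_eq_qf_sum D)
    rw [htr] at this
    simp only [Complex.add_re, Complex.one_re] at this
    linarith [iD1, iD3]
  -- arithmetic contradiction
  have key : (3*l - 2) * fA + l * fB ≤ 0 := by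
    nlinarith [mul_le_mul_of_nonneg_left i4 hl0.le, e1]
  have hfA0 : fA = 0 := by
    have h1 : 0 ≤ (3*l - 2) * fA := mul_nonneg (by linarith) i1
    have h2 : 0 ≤ l * fB := mul_nonneg hl0.le i2
    have h3 : (3*l - 2) * fA = 0 := by linarith
    have h4 : (3*l - 2) ≠ 0 := by intro h; linarith [hl]
    exact (mul_eq_zero.mp h3).resolve_left h4
  have hfD1 : fD = 1 := by
    rw [hfA0] at e1
    have h : l * fD = l * 1 := by linarith
    exact mul_left_cancel₀ (ne_of_gt hl0) h
  have hgD0 : gD ≤ 0 := by linarith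
  nlinarith [e2, i3, mul_nonpos_of_nonneg_of_nonpos hl0.le hgD0]

end
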